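/- (Generating function) For all real x, u, v, the family ((m,n) ↦ H_{m,n}(x)·u^m·v^n/(m!·n!)) indexed by ℕ × ℕ is summable, and its sum equals exp(−u² + (2u+v)·x − u·v). -/

import Mathlib

open Polynomial Finset

/-- The operator `A p = 2·X·p − p′`. -/
noncomputable def A (p : ℝ[X]) : ℝ[X] := 2 * X * p - derivative p

/-- The two-index Hermite polynomial `H_{m,n} = A^m (X^n)`. -/
noncomputable def H (m n : ℕ) : ℝ[X] := A^[m] (X ^ n)

namespace HmnAux

noncomputable def B (e : ℝ) (p : ℝ[X]) : ℝ[X] := derivative p + C (2 * e) * (X * p)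

noncomputable def T (e : ℝ) (m n : ℕ) : ℝ[X] := (B e)^[m] (X ^ n)

lemma A_eq (p : ℝ[X]) : A p = -B (-1) p := by
  have h : (C (2 * (-1 : ℝ))) = -2 := by norm_num [map_ofNat]
  simp only [A, B, h]
  ring

lemma T_succ (e : ℝ) (m n : ℕ) : T e (m+1) n = B e (T e m n) := by
  simp [T, Function.iterate_succ_apply']

lemma H_succ (m n : ℕ) : H (m+1) n = A (H m n) := by
  simp [H, Function.iterate_succ_apply']

lemma A_smul (c : ℝ) (p : ℝ[X]) : A (c • p) = c • A p := by
  simp [A, smul_sub, mul_smul_comm]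

lemma H_eq (m n : ℕ) : H m n = (-1 : ℝ)^m • T (-1) m n := by
  induction m with
  | zero => simp [H, T]
  | succ m ih =>
    rw [H_succ, ih, A_smul, A_eq, T_succ, ← neg_one_smul ℝ (B (-1) (T (-1) m n)),
      smul_smul, pow_succ]

lemma H_eval (m n : ℕ) (x : ℝ) : (H m n).eval x = (-1 : ℝ)^m * (T (-1) m n).eval x := by
  rw [H_eq]; simp

lemma coeff_B_zero (e : ℝ) (p : ℝ[X]) : (B e p).coeff 0 = p.coeff 1 := by
  simp [B, coeff_derivative, mul_coeff_zero]

lemma coeff_B_succ (e : ℝ) (p : ℝ[X]) (i : ℕ) :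
    (B e p).coeff (i+1) = p.coeff (i+2) * (i+2) + 2 * e * p.coeff i := by
  simp only [B, coeff_add, coeff_derivative, coeff_C_mul, coeff_X_mul]
  push_cast
  ring

lemma coeff_T_dom (m n : ℕ) : ∀ i, |(T (-1) m n).coeff i| ≤ (T 1 m n).coeff i := by
  induction m with
  | zero =>
    intro i
    simp only [T, Function.iterate_zero_apply, coeff_X_pow]
    split <;> simp
  | succ m ih =>
    intro i
    rw [T_succ, T_succ]
    match i with
    | 0 =>
      rw [coeff_B_zero, coeff_B_zero]
      exact ih 1
    | Nat.succ j =>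
      rw [coeff_B_succ, coeff_B_succ]
      have hj : |((j : ℝ) + 2)| = (j : ℝ) + 2 := abs_of_nonneg (by positivity)
      calc |(T (-1) m n).coeff (j+2) * ((j:ℝ)+2) + 2 * (-1) * (T (-1) m n).coeff j|
          ≤ |(T (-1) m n).coeff (j+2)| * ((j:ℝ)+2)
            + 2 * |(T (-1) m n).coeff j| := by
            refine (abs_add_le _ _).trans ?_
            rw [abs_mul, abs_mul, abs_mul, hj]
            norm_num
        _ ≤ (T 1 m n).coeff (j+2) * ((j:ℝ)+2) + 2 * 1 * (T 1 m n).coeff j := by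
            have h1 := ih (j+2)
            have h2 := ih j
            nlinarith [abs_nonneg ((T (-1) m n).coeff j), Nat.cast_nonneg (α := ℝ) j]

lemma coeff_T_nonneg (m n i : ℕ) : 0 ≤ (T 1 m n).coeff i :=
  (abs_nonneg _).trans (coeff_T_dom m n i)

lemma natDegree_B_le (e : ℝ) (p : ℝ[X]) : (B e p).natDegree ≤ p.natDegree + 1 := by
  refine (natDegree_add_le _ _).trans (max_le ?_ ?_)
  · exact (natDegree_derivative_le p).trans (by omega)
  · refine natDegree_mul_le.trans ?_
    rw [natDegree_C, zero_add]
    refine natDegree_mul_le.trans ?_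
    rw [natDegree_X]
    omega

lemma natDegree_T_le (e : ℝ) (m n : ℕ) : (T e m n).natDegree ≤ m + n := by
  induction m with
  | zero => simpa [T] using natDegree_X_pow_le n
  | succ m ih =>
    rw [T_succ]
    exact (natDegree_B_le _ _).trans (by omega)

lemma eval_T_dom (m n : ℕ) (x : ℝ) :
    |(T (-1) m n).eval x| ≤ (T 1 m n).eval |x| := by
  have h1 : (T (-1) m n).natDegree < m + n + 1 := Nat.lt_succ_of_le (natDegree_T_le _ _ _)
  have h2 : (T 1 m n).natDegree < m + n + 1 := Nat.lt_succ_of_le (natDegree_T_le _ _ _)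
  rw [eval_eq_sum_range' h1, eval_eq_sum_range' h2]
  calc |∑ i ∈ range (m+n+1), (T (-1) m n).coeff i * x ^ i|
      ≤ ∑ i ∈ range (m+n+1), |(T (-1) m n).coeff i * x ^ i| := Finset.abs_sum_le_sum_abs _ _
    _ ≤ ∑ i ∈ range (m+n+1), (T 1 m n).coeff i * |x| ^ i := by
        refine Finset.sum_le_sum fun i _ => ?_
        rw [abs_mul, abs_pow]
        exact mul_le_mul_of_nonneg_right (coeff_T_dom m n i) (by positivity)


noncomputable def Pc (p : ℝ[X]) : ℂ[X] := p.map (algebraMap ℝ ℂ)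

lemma Pc_eval_ofReal (p : ℝ[X]) (x : ℝ) : (Pc p).eval (x : ℂ) = ((p.eval x : ℝ) : ℂ) := by
  rw [Pc, eval_map, ← Complex.coe_algebraMap, eval₂_at_apply]

lemma hasDerivAt_aux (e : ℝ) (p : ℝ[X]) (z : ℂ) :
    HasDerivAt (fun w : ℂ => Complex.exp (e * w^2) * (Pc p).eval w)
      (Complex.exp (e * z^2) * (Pc (B e p)).eval z) z := by
  have h1 : HasDerivAt (fun w : ℂ => (e : ℂ) * w^2) ((e:ℂ) * (2*z)) z := by
    simpa using ((hasDerivAt_pow 2 z).const_mul (e:ℂ))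
  have h2 := h1.cexp
  have h3 : HasDerivAt (fun w : ℂ => (Pc p).eval w) ((Pc p).derivative.eval z) z :=
    (Pc p).hasDerivAt z
  have h4 := h2.mul h3
  refine h4.congr_deriv ?_
  have hd : (Pc (B e p)) = derivative (Pc p) + C ((2*e : ℝ) : ℂ) * (X * Pc p) := by
    simp [Pc, B, derivative_map, Polynomial.map_mul, Polynomial.map_add]
  rw [hd]
  simp only [eval_add, eval_mul, eval_C, eval_X]
  push_cast
  ring

lemma iteratedDeriv_aux (e : ℝ) (n m : ℕ) :
    iteratedDeriv m (fun w : ℂ => Complex.exp (e * w^2) * (Pc ((X:ℝ[X])^n)).eval w)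
      = fun z => Complex.exp (e * z^2) * (Pc (T e m n)).eval z := by
  induction m with
  | zero => simp [T]
  | succ m ih =>
    rw [iteratedDeriv_succ, ih]
    funext z
    rw [T_succ]
    exact (hasDerivAt_aux e (T e m n) z).deriv

lemma row (e x' u' : ℝ) (n : ℕ) :
    HasSum (fun m : ℕ => (T e m n).eval x' * u' ^ m / m.factorial)
      (Real.exp (e * (x'+u')^2 - e * x'^2) * (x'+u')^n) := by
  have hf : Differentiable ℂ (fun w : ℂ => Complex.exp (e * w^2) * (Pc ((X:ℝ[X])^n)).eval w) :=
    fun z => (hasDerivAt_aux e ((X:ℝ[X])^n) z).differentiableAt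
  have h := Complex.hasSum_taylorSeries_of_entire hf (x' : ℂ) (((x' + u' : ℝ) : ℂ))
  have key : (fun m : ℕ => (m.factorial : ℂ)⁻¹ • (((x'+u' : ℝ):ℂ) - (x':ℂ))^m
        • iteratedDeriv m (fun w : ℂ => Complex.exp (e * w^2) * (Pc ((X:ℝ[X])^n)).eval w) (x':ℂ))
      = fun m : ℕ => ((Real.exp (e*x'^2) * ((T e m n).eval x' * u'^m / m.factorial) : ℝ) : ℂ) := by
    funext m
    rw [iteratedDeriv_aux e n m]
    simp only [Pc_eval_ofReal, smul_eq_mul]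
    push_cast
    ring
  have htarget : Complex.exp ((e:ℂ) * ((x' + u' : ℝ):ℂ)^2) * (Pc ((X:ℝ[X])^n)).eval ((x' + u' : ℝ):ℂ)
      = ((Real.exp (e*(x'+u')^2) * (x'+u')^n : ℝ) : ℂ) := by
    simp only [Pc_eval_ofReal, eval_pow, eval_X]
    push_cast
    ring
  rw [key, htarget] at h
  have h2 := Complex.hasSum_ofReal.mp h
  have h3 := h2.mul_left (Real.exp (e*x'^2))⁻¹
  have hc : (Real.exp (e*x'^2))⁻¹ * (Real.exp (e*(x'+u')^2) * (x'+u')^n)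
      = Real.exp (e * (x'+u')^2 - e * x'^2) * (x'+u')^n := by
    rw [Real.exp_sub]
    field_simp
  rw [hc] at h3
  refine h3.congr_fun fun m => ?_
  field_simp


lemma rowH (x u : ℝ) (n : ℕ) :
    HasSum (fun m : ℕ => (H m n).eval x * u ^ m / m.factorial)
      (Real.exp (2*u*x - u^2) * (x-u)^n) := by
  have h := row (-1) x (-u) n
  rw [show (-1:ℝ) * (x + -u)^2 - (-1)*x^2 = 2*u*x - u^2 by ring,
    show x + -u = x - u by ring] at h
  refine h.congr_fun fun m => ?_
  rw [H_eval, neg_pow]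
  ring

lemma rowPos (x u : ℝ) (n : ℕ) :
    HasSum (fun m : ℕ => (T 1 m n).eval |x| * |u| ^ m / m.factorial)
      (Real.exp (2 * |u| * |x| + u^2) * (|x|+|u|)^n) := by
  have h := row 1 |x| |u| n
  rw [show (1:ℝ) * (|x| + |u|)^2 - 1*|x|^2 = 2 * |u| * |x| + |u|^2 by ring, sq_abs] at h
  exact h

lemma eval_T_nonneg (m n : ℕ) {y : ℝ} (hy : 0 ≤ y) : 0 ≤ (T 1 m n).eval y := by
  rw [eval_eq_sum_range' (Nat.lt_succ_of_le (natDegree_T_le 1 m n))]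
  exact Finset.sum_nonneg fun i _ => mul_nonneg (coeff_T_nonneg m n i) (pow_nonneg hy i)

end HmnAux

open HmnAux

theorem hmn_generating_function (x u v : ℝ) :
    Summable (fun p : ℕ × ℕ =>
      (H p.1 p.2).eval x * u ^ p.1 * v ^ p.2 /
        ((p.1.factorial : ℝ) * (p.2.factorial : ℝ))) ∧
    ∑' p : ℕ × ℕ,
      (H p.1 p.2).eval x * u ^ p.1 * v ^ p.2 /
        ((p.1.factorial : ℝ) * (p.2.factorial : ℝ)) =
      Real.exp (-u ^ 2 + (2 * u + v) * x - u * v) := by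
  set F : ℕ × ℕ → ℝ := fun p =>
    (H p.1 p.2).eval x * u ^ p.1 * v ^ p.2 /
      ((p.1.factorial : ℝ) * (p.2.factorial : ℝ)) with hF
  set G : ℕ × ℕ → ℝ := fun q =>
    (T 1 q.2 q.1).eval |x| * |u| ^ q.2 / q.2.factorial * (|v| ^ q.1 / q.1.factorial) with hG
  have hGnonneg : 0 ≤ G := by
    intro q
    have := eval_T_nonneg q.2 q.1 (abs_nonneg x)
    positivity
  have hGrow : ∀ n : ℕ, HasSum (fun m => G (n, m))
      ((Real.exp (2 * |u| * |x| + u^2) * (|x|+|u|)^n) * (|v|^n / n.factorial)) :=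
    fun n => (rowPos x u n).mul_right _
  have hGsummable : Summable G := by
    refine (summable_prod_of_nonneg hGnonneg).mpr ⟨fun n => (hGrow n).summable, ?_⟩
    refine Summable.congr ?_ (fun n => ((hGrow n).tsum_eq).symm)
    refine ((Real.summable_pow_div_factorial ((|x|+|u|)*|v|)).mul_left
      (Real.exp (2 * |u| * |x| + u^2))).congr fun n => ?_
    rw [mul_pow]
    ring
  have hFabs : ∀ q : ℕ × ℕ, |F (q.2, q.1)| ≤ G q := by
    rintro ⟨n, m⟩
    have h1 : |(H m n).eval x| ≤ (T 1 m n).eval |x| := by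
      rw [H_eval, abs_mul, abs_pow, abs_neg, abs_one, one_pow, one_mul]
      exact eval_T_dom m n x
    have h2 : |F (m, n)| = |(H m n).eval x| * |u|^m * |v|^n /
        ((m.factorial : ℝ) * (n.factorial : ℝ)) := by
      simp only [hF]
      rw [abs_div, abs_mul, abs_mul, abs_pow, abs_pow, abs_mul,
        Nat.abs_cast, Nat.abs_cast]
    rw [h2]
    simp only [hG]
    rw [div_mul_div_comm]
    gcongr
  have hFswap : Summable (fun q : ℕ × ℕ => F (q.2, q.1)) :=
    Summable.of_abs (hGsummable.of_nonneg_of_le (fun q => abs_nonneg _) hFabs)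
  have hFsummable : Summable F := (Equiv.prodComm ℕ ℕ).summable_iff.mp hFswap
  refine ⟨hFsummable, ?_⟩
  have h1 : ∑' p, F p = ∑' q : ℕ × ℕ, F (q.2, q.1) :=
    ((Equiv.prodComm ℕ ℕ).tsum_eq F).symm
  have hinner : ∀ n, ∑' m, F (m, n)
      = Real.exp (2*u*x - u^2) * (((x-u)*v)^n / n.factorial) := by
    intro n
    have h := (rowH x u n).mul_right (v^n / n.factorial)
    calc ∑' m, F (m, n)
        = ∑' m, (H m n).eval x * u ^ m / m.factorial * (v^n / n.factorial) := by
          refine tsum_congr fun m => ?_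
          simp only [hF]
          ring
      _ = Real.exp (2*u*x - u^2) * (x-u)^n * (v^n / n.factorial) := h.tsum_eq
      _ = Real.exp (2*u*x - u^2) * (((x-u)*v)^n / n.factorial) := by
          rw [mul_pow]; ring
  have hexp : ∑' n : ℕ, ((x-u)*v)^n / n.factorial = Real.exp ((x-u)*v) := by
    rw [Real.exp_eq_exp_ℝ, NormedSpace.exp_eq_tsum_div]
  rw [h1, hFswap.tsum_prod]
  calc ∑' (n : ℕ) (m : ℕ), F (m, n)
      = ∑' n : ℕ, Real.exp (2*u*x - u^2) * (((x-u)*v)^n / n.factorial) :=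
        tsum_congr hinner
    _ = Real.exp (2*u*x - u^2) * ∑' n : ℕ, ((x-u)*v)^n / n.factorial := tsum_mul_left
    _ = Real.exp (-u ^ 2 + (2 * u + v) * x - u * v) := by
        rw [hexp, ← Real.exp_add]
        ring_nf
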